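/- Fix real k_s, k_m, k_ℓ with k_m ≥ 0 and set 𝛂 = k_s + k_ℓ − 1/2, 𝛃 = k_ℓ − 1/2. Then any two distinct members of Π_k are disjoint: if w, w' ∈ W, 0 ≤ i, i' ≤ r, ξ ∈ D_k(Θ_i), ξ' ∈ D_k(Θ_{i'}), and the sets L = w·{(ξ_1,…,ξ_i, √−1 t_{i+1},…,√−1 t_r) : t_{i+1},…,t_r ∈ ℝ} and L' = w'·{(ξ'_1,…,ξ'_{i'}, √−1 t_{i'+1},…,√−1 t_r) : t_{i'+1},…,t_r ∈ ℝ} have a common point, then L = L'. -/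

import Mathlib

noncomputable section

/-- The set `D_k(Θ_i)` of discrete spectral parameters (for `i = 0` this is the
singleton consisting of the empty tuple). -/
def DkSet (α β km : ℝ) (i : ℕ) : Set (Fin i → ℝ) :=
  {ξ | (∀ h : 0 < i, ∃ n : ℕ, ξ ⟨0, h⟩ + |β| - α - 1 = 2 * (n : ℝ)) ∧
       (∀ h : 0 < i, ξ ⟨i - 1, by omega⟩ < 0) ∧
       (∀ j : ℕ, ∀ h : j + 1 < i,
         ∃ n : ℕ, ξ ⟨j + 1, h⟩ - ξ ⟨j, by omega⟩ - 2 * km = 2 * (n : ℝ))}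

/-- Action on `ℂ^r` of the element of the Weyl group of type `BC_r` given by the
sign vector `ε` and the permutation `σ`. -/
def wActC (r : ℕ) (ε : Fin r → ℤˣ) (σ : Equiv.Perm (Fin r)) (z : Fin r → ℂ) : Fin r → ℂ :=
  fun j => ((ε j : ℤ) : ℂ) * z (σ⁻¹ j)

/-- The set `{(ξ_1, …, ξ_i, √−1 t_{i+1}, …, √−1 t_r) : t ∈ ℝ^{r−i}} ⊆ ℂ^r`. -/
def baseSet (r i : ℕ) (ξ : Fin i → ℝ) : Set (Fin r → ℂ) :=
  {z | (∀ j : Fin r, ∀ h : (j : ℕ) < i, z j = ((ξ ⟨(j : ℕ), h⟩ : ℝ) : ℂ)) ∧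
       (∀ j : Fin r, i ≤ (j : ℕ) → (z j).re = 0)}

lemma dk_mono_aux {α β km : ℝ} (hkm : 0 ≤ km) {i : ℕ} {ξ : Fin i → ℝ}
    (hξ : ξ ∈ DkSet α β km i) :
    ∀ d j, ∀ h : j + d < i, ξ ⟨j, by omega⟩ ≤ ξ ⟨j + d, h⟩ := by
  intro d
  induction d with
  | zero => intro j h; simp
  | succ d ih =>
    intro j h
    have h1 : j + d < i := by omega
    have step : ξ ⟨j + d, h1⟩ ≤ ξ ⟨j + d + 1, by omega⟩ := by
      obtain ⟨n, hn⟩ := hξ.2.2 (j + d) (by omega)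
      have hn0 : (0:ℝ) ≤ 2 * (n : ℝ) := by positivity
      linarith
    have := ih j h1
    have heq : (⟨j + (d + 1), h⟩ : Fin i) = ⟨j + d + 1, by omega⟩ := by
      apply Fin.ext; simp; omega
    rw [heq]
    linarith

lemma dk_neg {α β km : ℝ} (hkm : 0 ≤ km) {i : ℕ} {ξ : Fin i → ℝ}
    (hξ : ξ ∈ DkSet α β km i) (j : Fin i) : ξ j < 0 := by
  have hi : 0 < i := j.pos
  have hlast := hξ.2.1 hi
  have hle : (j : ℕ) + (i - 1 - (j : ℕ)) < i := by omega
  have := dk_mono_aux hkm hξ (i - 1 - (j : ℕ)) (j : ℕ) hle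
  have h1 : (⟨(j : ℕ), by omega⟩ : Fin i) = j := by apply Fin.ext; simp
  have h2 : (⟨(j : ℕ) + (i - 1 - (j : ℕ)), hle⟩ : Fin i) = ⟨i - 1, by omega⟩ := by
    apply Fin.ext; simp; omega
  rw [h1, h2] at this
  linarith

lemma wAct_image_eq (r i : ℕ) (ξ : Fin i → ℝ) (ε : Fin r → ℤˣ)
    (σ : Equiv.Perm (Fin r)) :
    wActC r ε σ '' baseSet r i ξ =
      {u | ∀ j : Fin r,
        (∀ h : ((σ⁻¹ j : Fin r) : ℕ) < i,
          u j = ((ε j : ℤ) : ℂ) * ((ξ ⟨((σ⁻¹ j : Fin r) : ℕ), h⟩ : ℝ) : ℂ)) ∧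
        (i ≤ ((σ⁻¹ j : Fin r) : ℕ) → (u j).re = 0)} := by
  ext u
  constructor
  · rintro ⟨z, ⟨hz1, hz2⟩, rfl⟩ j
    refine ⟨fun h => ?_, fun h => ?_⟩
    · simp only [wActC]
      rw [hz1 (σ⁻¹ j) h]
    · simp only [wActC]
      have := hz2 (σ⁻¹ j) h
      rw [Equiv.Perm.inv_def] at this
      simp [Complex.mul_re, this]
  · intro hu
    refine ⟨fun j => ((ε (σ j) : ℤ) : ℂ) * u (σ j), ⟨?_, ?_⟩, ?_⟩
    · intro j hj
      have hj' : ((σ⁻¹ (σ j) : Fin r) : ℕ) < i := by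
        rw [Equiv.Perm.inv_def, Equiv.symm_apply_apply]; exact hj
      have hmk : (⟨((σ⁻¹ (σ j) : Fin r) : ℕ), hj'⟩ : Fin i) = ⟨(j : ℕ), hj⟩ := by
        apply Fin.ext; simp
      have := (hu (σ j)).1 hj'
      dsimp only
      rw [this, hmk, ← mul_assoc]
      have hsq : ((ε (σ j) : ℤ) : ℂ) * ((ε (σ j) : ℤ) : ℂ) = 1 := by
        norm_cast
        rw [Int.units_mul_self]
        simp
      rw [hsq, one_mul]
    · intro j hj
      have hj' : i ≤ ((σ⁻¹ (σ j) : Fin r) : ℕ) := by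
        rw [Equiv.Perm.inv_def, Equiv.symm_apply_apply]; exact hj
      have := (hu (σ j)).2 hj'
      simp [Complex.mul_re, this]
    · funext j
      simp only [wActC]
      rw [Equiv.Perm.inv_def, Equiv.apply_symm_apply, ← mul_assoc]
      have hsq : ((ε j : ℤ) : ℂ) * ((ε j : ℤ) : ℂ) = 1 := by
        norm_cast
        rw [Int.units_mul_self]
        simp
      rw [hsq, one_mul]

lemma re_unit_mul (e : ℤˣ) (x : ℝ) :
    (((e : ℤ) : ℂ) * ((x : ℝ) : ℂ)).re = ((e : ℤ) : ℝ) * x := by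
  simp [Complex.mul_re]

theorem stmt9 (ks km kl α β : ℝ) (hα : α = ks + kl - 1 / 2) (hβ : β = kl - 1 / 2)
    (hkm : 0 ≤ km) (r : ℕ)
    (i i' : ℕ) (hir : i ≤ r) (hi'r : i' ≤ r)
    (ξ : Fin i → ℝ) (hξ : ξ ∈ DkSet α β km i)
    (ξ' : Fin i' → ℝ) (hξ' : ξ' ∈ DkSet α β km i')
    (ε ε' : Fin r → ℤˣ) (σ σ' : Equiv.Perm (Fin r))
    (h : ((wActC r ε σ '' baseSet r i ξ) ∩ (wActC r ε' σ' '' baseSet r i' ξ')).Nonempty) :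
    wActC r ε σ '' baseSet r i ξ = wActC r ε' σ' '' baseSet r i' ξ' := by
  obtain ⟨u, hu, hu'⟩ := h
  rw [wAct_image_eq] at hu hu'
  -- nonvanishing of the real constants
  have hre : ∀ j : Fin r, ∀ h : ((σ⁻¹ j : Fin r) : ℕ) < i,
      (u j).re ≠ 0 := by
    intro j hj
    rw [(hu j).1 hj, re_unit_mul]
    refine mul_ne_zero ?_ (ne_of_lt (dk_neg hkm hξ _))
    exact_mod_cast (ε j).ne_zero
  have hre' : ∀ j : Fin r, ∀ h : ((σ'⁻¹ j : Fin r) : ℕ) < i',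
      (u j).re ≠ 0 := by
    intro j hj
    rw [(hu' j).1 hj, re_unit_mul]
    refine mul_ne_zero ?_ (ne_of_lt (dk_neg hkm hξ' _))
    exact_mod_cast (ε' j).ne_zero
  -- the supports agree
  have hiff : ∀ j : Fin r, ((σ⁻¹ j : Fin r) : ℕ) < i ↔ ((σ'⁻¹ j : Fin r) : ℕ) < i' := by
    intro j
    constructor
    · intro hj
      by_contra hc
      exact hre j hj ((hu' j).2 (le_of_not_gt hc))
    · intro hj
      by_contra hc
      exact hre' j hj ((hu j).2 (le_of_not_gt hc))
  -- the constants agree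
  have hcst : ∀ j : Fin r, ∀ h1 : ((σ⁻¹ j : Fin r) : ℕ) < i,
      ∀ h2 : ((σ'⁻¹ j : Fin r) : ℕ) < i',
      ((ε j : ℤ) : ℂ) * ((ξ ⟨((σ⁻¹ j : Fin r) : ℕ), h1⟩ : ℝ) : ℂ) =
        ((ε' j : ℤ) : ℂ) * ((ξ' ⟨((σ'⁻¹ j : Fin r) : ℕ), h2⟩ : ℝ) : ℂ) := by
    intro j h1 h2
    rw [← (hu j).1 h1, ← (hu' j).1 h2]
  rw [wAct_image_eq, wAct_image_eq]
  ext v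
  simp only [Set.mem_setOf_eq]
  constructor
  · intro hv j
    refine ⟨fun h2 => ?_, fun h2 => ?_⟩
    · have h1 : ((σ⁻¹ j : Fin r) : ℕ) < i := (hiff j).mpr h2
      rw [(hv j).1 h1, hcst j h1 h2]
    · exact (hv j).2 (le_of_not_gt (fun hc => absurd ((hiff j).mp hc) (not_lt_of_ge h2)))
  · intro hv j
    refine ⟨fun h1 => ?_, fun h1 => ?_⟩
    · have h2 : ((σ'⁻¹ j : Fin r) : ℕ) < i' := (hiff j).mp h1
      rw [(hv j).1 h2, ← hcst j h1 h2]
    · exact (hv j).2 (le_of_not_gt (fun hc => absurd ((hiff j).mpr hc) (not_lt_of_ge h1)))
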